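/- Fix 0 < ε < 1 and N ≥ 1. Define tasks τ₁ = (C₁=1, T₁=(1+ε)^{N−2}/ε^{N−1}, D₁=1) and, for 2 ≤ i ≤ N, τᵢ with Dᵢ = Cᵢ = (1+ε)^{i−2}/ε^{i−1} and Tᵢ = (1+ε)^{N−2}/ε^{N−1}. Then for all t ≥ 0, Σ_{i=1}^{N} dbf(τᵢ, t) ≤ (1+ε)·t. -/

import Mathlib

/-- Demand bound function of a sporadic task (C, T, D) at time t. -/
noncomputable def dbf (C T D t : ℝ) : ℝ := ((max 0 (⌊(t - D) / T⌋ + 1) : ℤ) : ℝ) * C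

/-- Relative deadline (= execution time) of task i in the instance of Theorem 4. -/
noncomputable def Dsp (ε : ℝ) (i : ℕ) : ℝ :=
  if i = 1 then 1 else (1 + ε) ^ (i - 2) / ε ^ (i - 1)

/-- Common period of all tasks in the instance of Theorem 4. -/
noncomputable def Tsp (ε : ℝ) (N : ℕ) : ℝ := (1 + ε) ^ (N - 2) / ε ^ (N - 1)

lemma Dsp_pos {ε : ℝ} (hε : 0 < ε) (i : ℕ) : 0 < Dsp ε i := by
  unfold Dsp
  split
  · norm_num
  · positivity

lemma Tsp_pos {ε : ℝ} (hε : 0 < ε) (N : ℕ) : 0 < Tsp ε N := by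
  unfold Tsp; positivity

lemma Dsp_le_Tsp {ε : ℝ} (hε₀ : 0 < ε) (hε₁ : ε < 1) {i N : ℕ} (h1 : 1 ≤ i) (h2 : i ≤ N) :
    Dsp ε i ≤ Tsp ε N := by
  have h1e : (1:ℝ) ≤ 1 + ε := by linarith
  have hεN : ε ^ (N - 1) ≤ 1 := pow_le_one₀ hε₀.le hε₁.le
  unfold Dsp Tsp
  split
  · rw [le_div_iff₀ (by positivity)]
    calc 1 * ε ^ (N-1) ≤ 1 := by rw [one_mul]; exact hεN
    _ ≤ (1+ε)^(N-2) := one_le_pow₀ h1e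
  · apply div_le_div₀ (by positivity) (pow_le_pow_right₀ h1e (by omega)) (by positivity)
    exact pow_le_pow_of_le_one hε₀.le hε₁.le (by omega)

lemma sum_Dsp {ε : ℝ} (hε : 0 < ε) {M : ℕ} (hM : 1 ≤ M) :
    ∑ i ∈ Finset.Icc 1 M, Dsp ε i = (1 + ε) ^ (M - 1) / ε ^ (M - 1) := by
  induction M with
  | zero => omega
  | succ n ih =>
    rcases Nat.eq_or_lt_of_le hM with h | h
    · simp [← h, Dsp]
    · have hn : 1 ≤ n := by omega
      rw [Finset.sum_Icc_succ_top (by omega), ih hn]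
      have hD : Dsp ε (n+1) = (1+ε)^(n-1) / ε^n := by
        unfold Dsp
        have : ¬ (n+1 = 1) := by omega
        rw [if_neg this]
        congr 1 <;> omega
      rw [hD]
      have hne : ε ^ n ≠ 0 := by positivity
      have hne1 : ε ^ (n-1) ≠ 0 := by positivity
      have hsplit : ε ^ n = ε ^ (n-1) * ε := by
        rw [← pow_succ]; congr 1; omega
      have hsplit2 : (1+ε) ^ n = (1+ε) ^ (n-1) * (1+ε) := by
        rw [← pow_succ]; congr 1; omega
      have : (n + 1 - 1) = n := rfl
      rw [this]
      field_simp
      rw [hsplit, hsplit2]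
      ring

lemma sum_Dsp_le {ε : ℝ} (hε₀ : 0 < ε) {M : ℕ} (hM : 1 ≤ M) :
    ∑ i ∈ Finset.Icc 1 M, Dsp ε i ≤ (1 + ε) * Dsp ε M := by
  rw [sum_Dsp hε₀ hM]
  rcases Nat.eq_or_lt_of_le hM with h | h
  · simp [← h, Dsp]; linarith
  · unfold Dsp
    rw [if_neg (by omega)]
    have h1 : (1+ε)^(M-1) = (1+ε) * (1+ε)^(M-2) := by
      rw [← pow_succ']; congr 1; omega
    rw [h1, mul_div_assoc]

lemma indic_sum {ε : ℝ} (hε₀ : 0 < ε) (hε₁ : ε < 1) (N : ℕ) {r : ℝ} (hr : 0 ≤ r) :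
    ∑ i ∈ Finset.Icc 1 N, (if Dsp ε i ≤ r then Dsp ε i else 0) ≤ (1 + ε) * r := by
  induction N with
  | zero => simp; positivity
  | succ n ih =>
    rw [Finset.sum_Icc_succ_top (by omega)]
    by_cases h : Dsp ε (n+1) ≤ r
    · rw [← Finset.sum_Icc_succ_top (by omega)]
      calc ∑ i ∈ Finset.Icc 1 (n+1), (if Dsp ε i ≤ r then Dsp ε i else 0)
          ≤ ∑ i ∈ Finset.Icc 1 (n+1), Dsp ε i := by
            apply Finset.sum_le_sum
            intro i _
            split
            · exact le_rfl
            · exact (Dsp_pos hε₀ i).le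
        _ ≤ (1+ε) * Dsp ε (n+1) := sum_Dsp_le hε₀ (by omega)
        _ ≤ (1+ε) * r := by nlinarith
    · rw [if_neg h, add_zero]; exact ih

theorem speedup_instance_feasible_on_one_fast_processor
    (ε : ℝ) (hε₀ : 0 < ε) (hε₁ : ε < 1) (N : ℕ) (hN : 1 ≤ N) :
    ∀ t : ℝ, 0 ≤ t →
      ∑ i ∈ Finset.Icc 1 N, dbf (Dsp ε i) (Tsp ε N) (Dsp ε i) t ≤ (1 + ε) * t := by
  intro t ht
  set T := Tsp ε N with hTdef
  have hT : 0 < T := Tsp_pos hε₀ N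
  set m : ℤ := ⌊t / T⌋ with hm
  have hm0 : 0 ≤ m := Int.floor_nonneg.2 (by positivity)
  set r : ℝ := t - m * T with hrdef
  have hml : (m:ℝ) * T ≤ t := by
    rw [hm]
    exact (le_div_iff₀ hT).mp (Int.floor_le (t/T))
  have hmu : t < ((m:ℝ) + 1) * T := by
    rw [hm]
    refine (div_lt_iff₀ hT).mp ?_
    have := Int.lt_floor_add_one (t/T)
    push_cast
    exact_mod_cast this
  have hr0 : 0 ≤ r := by rw [hrdef]; linarith
  have hrT : r < T := by rw [hrdef]; nlinarith
  have ht_eq : t = m * T + r := by rw [hrdef]; ring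
  -- pointwise computation of dbf
  have key : ∀ i ∈ Finset.Icc 1 N,
      dbf (Dsp ε i) T (Dsp ε i) t
        = (m : ℝ) * Dsp ε i + (if Dsp ε i ≤ r then Dsp ε i else 0) := by
    intro i hi
    rw [Finset.mem_Icc] at hi
    have hD : 0 < Dsp ε i := Dsp_pos hε₀ i
    have hDT : Dsp ε i ≤ T := Dsp_le_Tsp hε₀ hε₁ hi.1 hi.2
    have hquot : (t - Dsp ε i) / T = (r - Dsp ε i) / T + (m : ℝ) := by
      rw [ht_eq]; field_simp; ring
    have hfl : ⌊(t - Dsp ε i) / T⌋ = ⌊(r - Dsp ε i) / T⌋ + m := by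
      rw [hquot, Int.floor_add_intCast]
    by_cases hc : Dsp ε i ≤ r
    · have h0 : ⌊(r - Dsp ε i) / T⌋ = 0 := by
        rw [Int.floor_eq_zero_iff]
        constructor
        · exact div_nonneg (by linarith) hT.le
        · rw [div_lt_one hT]; linarith
      unfold dbf
      rw [hfl, h0, if_pos hc]
      rw [max_eq_right (by omega)]
      push_cast
      ring
    · have h0 : ⌊(r - Dsp ε i) / T⌋ = -1 := by
        rw [Int.floor_eq_iff]
        constructor
        · push_cast
          rw [le_div_iff₀ hT]
          linarith
        · push_cast
          norm_num
          exact div_neg_of_neg_of_pos (by linarith) hT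
      unfold dbf
      rw [hfl, h0, if_neg hc]
      rw [max_eq_right (by omega)]
      push_cast
      ring
  rw [Finset.sum_congr rfl key]
  rw [Finset.sum_add_distrib, ← Finset.mul_sum]
  have h1 : (m:ℝ) * ∑ i ∈ Finset.Icc 1 N, Dsp ε i ≤ (m:ℝ) * ((1+ε) * T) := by
    apply mul_le_mul_of_nonneg_left _ (by exact_mod_cast hm0)
    calc ∑ i ∈ Finset.Icc 1 N, Dsp ε i ≤ (1+ε) * Dsp ε N := sum_Dsp_le hε₀ hN
      _ ≤ (1+ε) * T := by
        exact mul_le_mul_of_nonneg_left (Dsp_le_Tsp hε₀ hε₁ hN (le_refl N)) (by linarith)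
  have h2 := indic_sum hε₀ hε₁ N hr0
  have hmT : 0 ≤ (m:ℝ) * T := by positivity
  calc (m:ℝ) * ∑ i ∈ Finset.Icc 1 N, Dsp ε i + ∑ i ∈ Finset.Icc 1 N, (if Dsp ε i ≤ r then Dsp ε i else 0)
      ≤ (m:ℝ) * ((1+ε)*T) + (1+ε)*r := add_le_add h1 h2
    _ = (1+ε) * (m*T + r) := by ring
    _ = (1+ε) * t := by rw [← ht_eq]
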